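/- arXiv:2303.06646 — 3 statements merged into one kernel-verified Lean document; each statement's English description precedes it below -/
import Mathlib

section
/- Let (M, E) be an exact category and 𝒫 a full additive subcategory of M which is strongly contravariantly finite. Then for any morphism g : Y → Z in M there exist an object P ∈ 𝒫 and a conflation 0 → X → Y ⊕ P → Z → 0 (whose deflation has components g and a 𝒫-precover β : P → Z) which is Hom(𝒫,−)-exact. -/
open CategoryTheory CategoryTheory.Limits

universe v u

namespace PaperQEC

section QuotientCategory

variable {C : Type u} [Category.{v} C] [Preadditive C]

/-- `f` factors through an object belonging to `P`. -/
def FactorsThru (P : Set C) {X Y : C} (f : X ⟶ Y) : Prop :=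
  ∃ Z ∈ P, ∃ (g : X ⟶ Z) (h : Z ⟶ Y), g ≫ h = f

/-- The subgroup of `Hom(X, Y)` generated by morphisms factoring through an object of `P`
(for `P` closed under finite sums this is just the set of such morphisms). -/
def factorIdeal (P : Set C) (X Y : C) : AddSubgroup (X ⟶ Y) :=
  AddSubgroup.closure {f | FactorsThru P f}

lemma factorIdeal_comp_left (P : Set C) {X Y Z : C} {f : X ⟶ Y}
    (hf : f ∈ factorIdeal P X Y) (g : Y ⟶ Z) : f ≫ g ∈ factorIdeal P X Z := by
  have h : factorIdeal P X Y ≤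
      (factorIdeal P X Z).comap (AddMonoidHom.mk' (fun u : X ⟶ Y => u ≫ g)
        (fun a b => Preadditive.add_comp _ _ _ _ _ _)) := by
    refine (AddSubgroup.closure_le _).mpr ?_
    rintro u ⟨Zp, hZp, a, b, rfl⟩
    exact AddSubgroup.mem_comap.mpr
      (AddSubgroup.subset_closure ⟨Zp, hZp, a, b ≫ g, (Category.assoc _ _ _).symm⟩)
  exact h hf

lemma factorIdeal_comp_right (P : Set C) {X Y Z : C} (f : X ⟶ Y) {g : Y ⟶ Z}
    (hg : g ∈ factorIdeal P Y Z) : f ≫ g ∈ factorIdeal P X Z := by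
  have h : factorIdeal P Y Z ≤
      (factorIdeal P X Z).comap (AddMonoidHom.mk' (fun u : Y ⟶ Z => f ≫ u)
        (fun a b => Preadditive.comp_add _ _ _ _ _ _)) := by
    refine (AddSubgroup.closure_le _).mpr ?_
    rintro u ⟨Zp, hZp, a, b, rfl⟩
    exact AddSubgroup.mem_comap.mpr
      (AddSubgroup.subset_closure ⟨Zp, hZp, f ≫ a, b, Category.assoc _ _ _⟩)
  exact h hg

/-- Objects of the quotient (stable) category `C / P`. -/
structure QuotObj (P : Set C) : Type u where
  obj : C

variable (P : Set C)

instance quotCategory : Category.{v} (QuotObj P) where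
  Hom A B := (A.obj ⟶ B.obj) ⧸ factorIdeal P A.obj B.obj
  id A := QuotientAddGroup.mk (𝟙 A.obj)
  comp {A B D} f g :=
    Quotient.liftOn₂ f g (fun a b => QuotientAddGroup.mk (a ≫ b)) (by
      intro a₁ b₁ a₂ b₂ ha hb
      have ha' : -a₁ + a₂ ∈ factorIdeal P A.obj B.obj := QuotientAddGroup.leftRel_apply.mp ha
      have hb' : -b₁ + b₂ ∈ factorIdeal P B.obj D.obj := QuotientAddGroup.leftRel_apply.mp hb
      refine (QuotientAddGroup.eq (s := factorIdeal P A.obj D.obj)).mpr ?_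
      have h1 : (-a₁ + a₂) ≫ b₁ ∈ factorIdeal P A.obj D.obj :=
        factorIdeal_comp_left P ha' b₁
      have h2 : a₂ ≫ (-b₁ + b₂) ∈ factorIdeal P A.obj D.obj :=
        factorIdeal_comp_right P a₂ hb'
      have h3 := AddSubgroup.add_mem _ h1 h2
      have heq : -(a₁ ≫ b₁) + a₂ ≫ b₂ = (-a₁ + a₂) ≫ b₁ + a₂ ≫ (-b₁ + b₂) := by
        simp only [Preadditive.add_comp, Preadditive.comp_add, Preadditive.neg_comp,
          Preadditive.comp_neg]
        abel
      rw [heq]; exact h3)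
  id_comp {A B} f := by
    induction f using Quotient.inductionOn with
    | h a => exact congrArg QuotientAddGroup.mk (Category.id_comp a)
  comp_id {A B} f := by
    induction f using Quotient.inductionOn with
    | h a => exact congrArg QuotientAddGroup.mk (Category.comp_id a)
  assoc {A B D E} f g h := by
    induction f using Quotient.inductionOn with
    | h a =>
    induction g using Quotient.inductionOn with
    | h b =>
    induction h using Quotient.inductionOn with
    | h c => exact congrArg QuotientAddGroup.mk (Category.assoc a b c)

/-- The image in the quotient category of a morphism of `C`. -/
def qmap {X Y : C} (f : X ⟶ Y) : (QuotObj.mk X : QuotObj P) ⟶ QuotObj.mk Y :=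
  QuotientAddGroup.mk f

instance quotPreadditive : Preadditive (QuotObj P) where
  homGroup A B :=
    inferInstanceAs (AddCommGroup ((A.obj ⟶ B.obj) ⧸ factorIdeal P A.obj B.obj))
  add_comp A B D f f' g := by
    induction f using Quotient.inductionOn with
    | h a =>
    induction f' using Quotient.inductionOn with
    | h a' =>
    induction g using Quotient.inductionOn with
    | h b =>
      show QuotientAddGroup.mk ((a + a') ≫ b) =
        QuotientAddGroup.mk (a ≫ b) + QuotientAddGroup.mk (a' ≫ b)
      rw [Preadditive.add_comp]
      rfl
  comp_add A B D f g g' := by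
    induction f using Quotient.inductionOn with
    | h a =>
    induction g using Quotient.inductionOn with
    | h b =>
    induction g' using Quotient.inductionOn with
    | h b' =>
      show QuotientAddGroup.mk (a ≫ (b + b')) =
        QuotientAddGroup.mk (a ≫ b) + QuotientAddGroup.mk (a ≫ b')
      rw [Preadditive.comp_add]
      rfl

end QuotientCategory

section Exact

variable {C : Type u} [Category.{v} C] [Preadditive C]

/-- `k` is a kernel of `f`. -/
def IsKernelOf {K X Y : C} (k : K ⟶ X) (f : X ⟶ Y) : Prop :=
  k ≫ f = 0 ∧ ∀ {T : C} (g : T ⟶ X), g ≫ f = 0 → ∃! t : T ⟶ K, t ≫ k = g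

/-- `c` is a cokernel of `f`. -/
def IsCokernelOf {X Y Q : C} (c : Y ⟶ Q) (f : X ⟶ Y) : Prop :=
  f ≫ c = 0 ∧ ∀ {T : C} (g : Y ⟶ T), f ≫ g = 0 → ∃! t : Q ⟶ T, c ≫ t = g

/-- A class of composable pairs of morphisms (the prospective conflations). -/
abbrev ConfClass (D : Type*) [Category D] :=
  ∀ ⦃X Y Z : D⦄, (X ⟶ Y) → (Y ⟶ Z) → Prop

/-- A Quillen exact structure on an additive category: a class of kernel–cokernel pairs
(conflations), closed under isomorphisms, containing the identities as inflations and
deflations, with inflations and deflations closed under composition, pushouts of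
inflations and pullbacks of deflations existing and being inflations resp. deflations. -/
structure ExactStructure (D : Type u) [Category.{v} D] [Preadditive D] where
  conf : ConfClass D
  ker_of_conf : ∀ {X Y Z : D} {i : X ⟶ Y} {d : Y ⟶ Z}, conf i d → IsKernelOf i d
  coker_of_conf : ∀ {X Y Z : D} {i : X ⟶ Y} {d : Y ⟶ Z}, conf i d → IsCokernelOf d i
  isoClosed : ∀ {X Y Z X' Y' Z' : D} {i : X ⟶ Y} {d : Y ⟶ Z} {i' : X' ⟶ Y'} {d' : Y' ⟶ Z'}
    (eX : X ≅ X') (eY : Y ≅ Y') (eZ : Z ≅ Z'),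
    i ≫ eY.hom = eX.hom ≫ i' → d ≫ eZ.hom = eY.hom ≫ d' → conf i d → conf i' d'
  id_isInflation : ∀ X : D, ∃ (Z : D) (d : X ⟶ Z), conf (𝟙 X) d
  id_isDeflation : ∀ X : D, ∃ (W : D) (i : W ⟶ X), conf i (𝟙 X)
  infl_comp : ∀ {X Y Z : D} (i : X ⟶ Y) (j : Y ⟶ Z),
    (∃ (W : D) (d : Y ⟶ W), conf i d) → (∃ (W : D) (d : Z ⟶ W), conf j d) →
    ∃ (W : D) (d : Z ⟶ W), conf (i ≫ j) d
  defl_comp : ∀ {X Y Z : D} (p : X ⟶ Y) (q : Y ⟶ Z),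
    (∃ (W : D) (i : W ⟶ X), conf i p) → (∃ (W : D) (i : W ⟶ Y), conf i q) →
    ∃ (W : D) (i : W ⟶ X), conf i (p ≫ q)
  infl_pushout : ∀ {X Y : D} (i : X ⟶ Y), (∃ (W : D) (d : Y ⟶ W), conf i d) →
    ∀ {A : D} (f : X ⟶ A), ∃ (B : D) (i' : A ⟶ B) (g : Y ⟶ B),
      (∃ (W : D) (d : B ⟶ W), conf i' d) ∧ IsPushout i f g i'
  defl_pullback : ∀ {Y Z : D} (p : Y ⟶ Z), (∃ (W : D) (i : W ⟶ Y), conf i p) →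
    ∀ {B : D} (f : B ⟶ Z), ∃ (A : D) (p' : A ⟶ B) (g : A ⟶ Y),
      (∃ (W : D) (i : W ⟶ A), conf i p') ∧ IsPullback g p' p f

/-- `i` is an inflation, i.e. the first map of some conflation. -/
def IsInflation (E : ConfClass C) {X Y : C} (i : X ⟶ Y) : Prop :=
  ∃ (Z : C) (d : Y ⟶ Z), E i d

/-- `d` is a deflation, i.e. the second map of some conflation. -/
def IsDeflation (E : ConfClass C) {Y Z : C} (d : Y ⟶ Z) : Prop :=
  ∃ (X : C) (i : X ⟶ Y), E i d

/-- `P` is a full additive subcategory: nonempty, closed under isomorphisms,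
finite sums and summands. -/
structure IsAddSubcat [HasBinaryBiproducts C] (P : Set C) : Prop where
  nonempty : P.Nonempty
  isoClosed : ∀ {X Y : C}, (X ≅ Y) → X ∈ P → Y ∈ P
  sumClosed : ∀ {X Y : C}, X ∈ P → Y ∈ P → (X ⊞ Y) ∈ P
  summandClosed : ∀ {X Y : C} (s : X ⟶ Y) (r : Y ⟶ X), s ≫ r = 𝟙 X → Y ∈ P → X ∈ P

/-- `f : Q ⟶ X` is a `P`-precover of `X`. -/
def IsPrecover (P : Set C) {Q X : C} (f : Q ⟶ X) : Prop :=
  Q ∈ P ∧ ∀ (Q' : C), Q' ∈ P → ∀ g : Q' ⟶ X, ∃ h : Q' ⟶ Q, h ≫ f = g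

/-- `f : X ⟶ Q` is a `P`-preenvelope of `X`. -/
def IsPreenvelope (P : Set C) {X Q : C} (f : X ⟶ Q) : Prop :=
  Q ∈ P ∧ ∀ (Q' : C), Q' ∈ P → ∀ g : X ⟶ Q', ∃ h : Q ⟶ Q', f ≫ h = g

/-- `P` is strongly contravariantly finite: every object has a `P`-precover
which is a deflation. -/
def StronglyContraFinite (E : ConfClass C) (P : Set C) : Prop :=
  ∀ X : C, ∃ (Q : C) (f : Q ⟶ X), IsPrecover P f ∧ IsDeflation E f

/-- `P` is strongly covariantly finite: every object has a `P`-preenvelope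
which is an inflation. -/
def StronglyCovFinite (E : ConfClass C) (P : Set C) : Prop :=
  ∀ X : C, ∃ (Q : C) (f : X ⟶ Q), IsPreenvelope P f ∧ IsInflation E f

/-- The pair `(i, d)` is `Hom(P,-)`-exact: for every `Q ∈ P`, the sequence
`0 → Hom(Q,X) → Hom(Q,Y) → Hom(Q,Z) → 0` is exact. -/
def HomCovExact (P : Set C) {X Y Z : C} (i : X ⟶ Y) (d : Y ⟶ Z) : Prop :=
  ∀ Q : C, Q ∈ P →
    (∀ g : Q ⟶ X, g ≫ i = 0 → g = 0) ∧
    (∀ u : Q ⟶ Y, u ≫ d = 0 → ∃ g : Q ⟶ X, g ≫ i = u) ∧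
    (∀ h : Q ⟶ Z, ∃ u : Q ⟶ Y, u ≫ d = h)

/-- The pair `(i, d)` is `Hom(-,P)`-exact: for every `Q ∈ P`, the sequence
`0 → Hom(Z,Q) → Hom(Y,Q) → Hom(X,Q) → 0` is exact. -/
def HomContraExact (P : Set C) {X Y Z : C} (i : X ⟶ Y) (d : Y ⟶ Z) : Prop :=
  ∀ Q : C, Q ∈ P →
    (∀ g : Z ⟶ Q, d ≫ g = 0 → g = 0) ∧
    (∀ u : Y ⟶ Q, i ≫ u = 0 → ∃ g : Z ⟶ Q, d ≫ g = u) ∧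
    (∀ h : X ⟶ Q, ∃ u : Y ⟶ Q, i ≫ u = h)

/-- Condition (▲): `P` is strongly covariantly finite and every `X` admits a conflation
`0 → X → Q₀ → Q₁ → 0` with `Q₀, Q₁ ∈ P` whose inflation is a `P`-preenvelope. -/
def CondEnv (E : ConfClass C) (P : Set C) : Prop :=
  StronglyCovFinite E P ∧
  ∀ X : C, ∃ (Q₀ Q₁ : C) (α : X ⟶ Q₀) (q : Q₀ ⟶ Q₁),
    E α q ∧ Q₀ ∈ P ∧ Q₁ ∈ P ∧ IsPreenvelope P α

/-- Condition (▼): `P` is strongly contravariantly finite and every `X` admits a conflation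
`0 → P₁ → P₀ → X → 0` with `P₀, P₁ ∈ P` whose deflation is a `P`-precover. -/
def CondCov (E : ConfClass C) (P : Set C) : Prop :=
  StronglyContraFinite E P ∧
  ∀ X : C, ∃ (P₀ P₁ : C) (i : P₁ ⟶ P₀) (β : P₀ ⟶ X),
    E i β ∧ P₀ ∈ P ∧ P₁ ∈ P ∧ IsPrecover P β

/-- `P` is a pseudo-cluster tilting subcategory. -/
def PseudoClusterTilting (E : ConfClass C) (P : Set C) : Prop :=
  CondEnv E P ∧ CondCov E P

/-- The conflation `(i, d)` splits. -/
def Splits {X Y Z : C} (i : X ⟶ Y) (d : Y ⟶ Z) : Prop :=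
  (∃ r : Y ⟶ X, i ≫ r = 𝟙 X) ∧ ∃ s : Z ⟶ Y, s ≫ d = 𝟙 Z

/-- `P` is self-orthogonal with respect to the class `cl` of conflations: every
conflation in `cl` with both end terms in `P` splits. -/
def SelfOrthWrt (P : Set C) (cl : ConfClass C) : Prop :=
  ∀ ⦃X Y Z : C⦄ (i : X ⟶ Y) (d : Y ⟶ Z), cl i d → X ∈ P → Z ∈ P → Splits i d

/-- `P` is a cluster tilting subcategory: a pseudo-cluster tilting subcategory which is
self-orthogonal with respect to all conflations. -/
def ClusterTilting (E : ConfClass C) (P : Set C) : Prop :=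
  PseudoClusterTilting E P ∧ SelfOrthWrt P E

/-- The class `𝒮` of conflations. -/
def memS (E : ConfClass C) (P : Set C) ⦃S₁ S₂ S₃ : C⦄ (i : S₁ ⟶ S₂) (d : S₂ ⟶ S₃) : Prop :=
  E i d ∧ ∃ (U M₁ M₂ : C) (u₁ : U ⟶ S₁) (p₁ : S₁ ⟶ M₁) (u₂ : U ⟶ S₂) (p₂ : S₂ ⟶ M₂)
    (m : M₁ ⟶ M₂) (q : M₂ ⟶ S₃),
    E u₁ p₁ ∧ E u₂ p₂ ∧ E m q ∧
    HomCovExact P u₂ p₂ ∧ HomContraExact P m q ∧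
    u₁ ≫ i = u₂ ∧ i ≫ p₂ = p₁ ≫ m ∧ d = p₂ ≫ q

/-- The class `𝒯` of conflations. -/
def memT (E : ConfClass C) (P : Set C) ⦃T₁ T₂ T₃ : C⦄ (i : T₁ ⟶ T₂) (d : T₂ ⟶ T₃) : Prop :=
  E i d ∧ ∃ (V N₂ N₃ : C) (n₁ : T₁ ⟶ N₂) (n₂ : N₂ ⟶ N₃) (j₂ : N₂ ⟶ T₂) (v₂ : T₂ ⟶ V)
    (j₃ : N₃ ⟶ T₃) (v₃ : T₃ ⟶ V),
    E n₁ n₂ ∧ E j₂ v₂ ∧ E j₃ v₃ ∧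
    HomCovExact P n₁ n₂ ∧ HomContraExact P j₂ v₂ ∧
    i = n₁ ≫ j₂ ∧ n₂ ≫ j₃ = j₂ ≫ d ∧ d ≫ v₃ = v₂

end Exact

section AbelianDefs

/-- A preadditive category is abelian (in the sense of Definition 2.1 of the paper) if it
has kernels and cokernels and the canonical morphism from the coimage to the image of any
morphism is an isomorphism. -/
def IsAbelianCat (D : Type*) [Category D] [Preadditive D] : Prop :=
  ∃ (hk : HasKernels D) (hc : HasCokernels D),
    ∀ {X Y : D} (f : X ⟶ Y),
      IsIso (@CategoryTheory.Abelian.coimageImageComparison D _ _ X Y f _ _ _ _)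

/-- A preadditive category is semi-abelian if it has kernels and cokernels and the
canonical morphism from the coimage to the image of any morphism is both an epimorphism
and a monomorphism. -/
def IsSemiAbelianCat (D : Type*) [Category D] [Preadditive D] : Prop :=
  ∃ (hk : HasKernels D) (hc : HasCokernels D),
    ∀ {X Y : D} (f : X ⟶ Y),
      Mono (@CategoryTheory.Abelian.coimageImageComparison D _ _ X Y f _ _ _ _) ∧
      Epi (@CategoryTheory.Abelian.coimageImageComparison D _ _ X Y f _ _ _ _)

end AbelianDefs

section ConflationCategory

variable {M : Type u} [Category.{v} M] [Preadditive M]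

/-- Objects of the category `E(M)` of conflations: conflations `0 → X₁ → X₂ → X₃ → 0`
of the exact category `(M, E)`. -/
structure ConfObj (E : ExactStructure M) : Type max u v where
  X₁ : M
  X₂ : M
  X₃ : M
  i : X₁ ⟶ X₂
  d : X₂ ⟶ X₃
  conf : E.conf i d

variable {E : ExactStructure M}

/-- The additive group of morphisms of conflations: triples of morphisms making the two
squares commute. -/
def confHomGroup (A B : ConfObj E) :
    AddSubgroup ((A.X₁ ⟶ B.X₁) × (A.X₂ ⟶ B.X₂) × (A.X₃ ⟶ B.X₃)) where
  carrier := {t | A.i ≫ t.2.1 = t.1 ≫ B.i ∧ A.d ≫ t.2.2 = t.2.1 ≫ B.d}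
  zero_mem' := by simp
  add_mem' := by
    rintro a b ⟨ha₁, ha₂⟩ ⟨hb₁, hb₂⟩
    refine ⟨?_, ?_⟩ <;>
      simp [Preadditive.comp_add, Preadditive.add_comp, ha₁, ha₂, hb₁, hb₂]
  neg_mem' := by
    rintro a ⟨h₁, h₂⟩
    refine ⟨?_, ?_⟩ <;> simp [h₁, h₂]

instance confCategoryStruct : CategoryStruct.{v} (ConfObj E) where
  Hom A B := ↥(confHomGroup A B)
  id A := ⟨(𝟙 _, 𝟙 _, 𝟙 _), by constructor <;> simp⟩
  comp {A B D} f g := ⟨(f.1.1 ≫ g.1.1, f.1.2.1 ≫ g.1.2.1, f.1.2.2 ≫ g.1.2.2), by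
    obtain ⟨hf₁, hf₂⟩ := f.2
    obtain ⟨hg₁, hg₂⟩ := g.2
    constructor
    · rw [← Category.assoc, hf₁, Category.assoc, hg₁, ← Category.assoc]
    · rw [← Category.assoc, hf₂, Category.assoc, hg₂, ← Category.assoc]⟩

/-- Degree `-1` component of a morphism of conflations. -/
def homC₁ {A B : ConfObj E} (f : A ⟶ B) : A.X₁ ⟶ B.X₁ := f.1.1

/-- Degree `0` component of a morphism of conflations. -/
def homC₂ {A B : ConfObj E} (f : A ⟶ B) : A.X₂ ⟶ B.X₂ := f.1.2.1

/-- Degree `1` component of a morphism of conflations. -/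
def homC₃ {A B : ConfObj E} (f : A ⟶ B) : A.X₃ ⟶ B.X₃ := f.1.2.2

lemma confHom_ext {A B : ConfObj E} {f g : A ⟶ B} (h₁ : homC₁ f = homC₁ g)
    (h₂ : homC₂ f = homC₂ g) (h₃ : homC₃ f = homC₃ g) : f = g := by
  apply Subtype.ext
  show (homC₁ f, homC₂ f, homC₃ f) = (homC₁ g, homC₂ g, homC₃ g)
  rw [h₁, h₂, h₃]

@[simp] lemma homC₁_id (A : ConfObj E) : homC₁ (𝟙 A) = 𝟙 A.X₁ := rfl
@[simp] lemma homC₂_id (A : ConfObj E) : homC₂ (𝟙 A) = 𝟙 A.X₂ := rfl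
@[simp] lemma homC₃_id (A : ConfObj E) : homC₃ (𝟙 A) = 𝟙 A.X₃ := rfl
@[simp] lemma homC₁_comp {A B D : ConfObj E} (f : A ⟶ B) (g : B ⟶ D) :
    homC₁ (f ≫ g) = homC₁ f ≫ homC₁ g := rfl
@[simp] lemma homC₂_comp {A B D : ConfObj E} (f : A ⟶ B) (g : B ⟶ D) :
    homC₂ (f ≫ g) = homC₂ f ≫ homC₂ g := rfl
@[simp] lemma homC₃_comp {A B D : ConfObj E} (f : A ⟶ B) (g : B ⟶ D) :
    homC₃ (f ≫ g) = homC₃ f ≫ homC₃ g := rfl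

instance confCategory : Category.{v} (ConfObj E) where
  id_comp f := confHom_ext (by simp) (by simp) (by simp)
  comp_id f := confHom_ext (by simp) (by simp) (by simp)
  assoc f g h := confHom_ext (by simp) (by simp) (by simp)

instance confHomAddCommGroup (A B : ConfObj E) : AddCommGroup (A ⟶ B) :=
  inferInstanceAs (AddCommGroup ↥(confHomGroup A B))

@[simp] lemma homC₁_add {A B : ConfObj E} (f g : A ⟶ B) :
    homC₁ (f + g) = homC₁ f + homC₁ g := rfl
@[simp] lemma homC₂_add {A B : ConfObj E} (f g : A ⟶ B) :
    homC₂ (f + g) = homC₂ f + homC₂ g := rfl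
@[simp] lemma homC₃_add {A B : ConfObj E} (f g : A ⟶ B) :
    homC₃ (f + g) = homC₃ f + homC₃ g := rfl

instance confPreadditive : Preadditive (ConfObj E) where
  homGroup A B := inferInstance
  add_comp A B D f f' g :=
    confHom_ext (by simp [Preadditive.add_comp]) (by simp [Preadditive.add_comp])
      (by simp [Preadditive.add_comp])
  comp_add A B D f g g' :=
    confHom_ext (by simp [Preadditive.comp_add]) (by simp [Preadditive.comp_add])
      (by simp [Preadditive.comp_add])

/-- The degree-wise class of conflations on `E(M)`: a short sequence of conflations is a
conflation if it is a conflation of `M` in each degree. -/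
def degConf (E : ExactStructure M) : ConfClass (ConfObj E) := fun _ _ _ f g =>
  E.conf (homC₁ f) (homC₁ g) ∧ E.conf (homC₂ f) (homC₂ g) ∧ E.conf (homC₃ f) (homC₃ g)

/-- The class `E₀`: degree-wise conflations splitting in degree `0`. -/
def degConf₀ (E : ExactStructure M) : ConfClass (ConfObj E) := fun _ _ _ f g =>
  degConf E f g ∧ Splits (homC₂ f) (homC₂ g)

/-- The class `E₀⁻¹`: degree-wise conflations splitting in degrees `-1` and `0`. -/
def degConf₀neg (E : ExactStructure M) : ConfClass (ConfObj E) := fun _ _ _ f g =>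
  degConf E f g ∧ Splits (homC₁ f) (homC₁ g) ∧ Splits (homC₂ f) (homC₂ g)

/-- The class `E₀¹`: degree-wise conflations splitting in degrees `0` and `1`. -/
def degConf₀pos (E : ExactStructure M) : ConfClass (ConfObj E) := fun _ _ _ f g =>
  degConf E f g ∧ Splits (homC₂ f) (homC₂ g) ∧ Splits (homC₃ f) (homC₃ g)

/-- The full subcategory `S(M)` of `E(M)` consisting of the split conflations. -/
def splitObjs (E : ExactStructure M) : Set (ConfObj E) :=
  {A | Splits A.i A.d}

end ConflationCategory


section AuxStatement2

variable {M : Type u} [Category.{v} M] [Preadditive M] [HasBinaryBiproducts M]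

/-- The split sequence `A → A ⊞ B → B` is a conflation. -/
lemma conf_inl_snd (E : ExactStructure M) (A B : M) :
    E.conf (biprod.inl : A ⟶ A ⊞ B) (biprod.snd : A ⊞ B ⟶ B) := by
  obtain ⟨W, i, hi⟩ := E.id_isDeflation B
  have hi0 : i = 0 := by simpa using (E.ker_of_conf hi).1
  obtain ⟨B', i', g', hinfl, hpo⟩ := E.infl_pushout i ⟨B, 𝟙 B, hi⟩ (0 : W ⟶ A)
  obtain ⟨C, d', hd'⟩ := hinfl
  have w0 : i ≫ (biprod.inr : B ⟶ A ⊞ B) = (0 : W ⟶ A) ≫ biprod.inl := by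
    rw [hi0]; simp
  set eh : B' ⟶ A ⊞ B := hpo.desc biprod.inr biprod.inl w0 with heh
  have h_inl : g' ≫ eh = biprod.inr := hpo.inl_desc _ _ _
  have h_inr : i' ≫ eh = biprod.inl := hpo.inr_desc _ _ _
  set einv : A ⊞ B ⟶ B' := biprod.desc i' g' with heinv
  have h1 : einv ≫ eh = 𝟙 (A ⊞ B) := by
    apply biprod.hom_ext' <;> simp [heinv, h_inl, h_inr]
  have h2 : eh ≫ einv = 𝟙 B' := by
    apply hpo.hom_ext
    · rw [← Category.assoc, h_inl]; simp [heinv]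
    · rw [← Category.assoc, h_inr]; simp [heinv]
  set e : B' ≅ A ⊞ B := ⟨eh, einv, h2, h1⟩ with he
  have hconf₂ : E.conf (biprod.inl : A ⟶ A ⊞ B) (einv ≫ d') := by
    refine E.isoClosed (Iso.refl A) e (Iso.refl C) ?_ ?_ hd'
    · simpa using h_inr
    · show d' ≫ 𝟙 C = eh ≫ einv ≫ d'
      rw [← Category.assoc, h2]; simp
  set d₂ : A ⊞ B ⟶ C := einv ≫ d' with hd₂
  have coker := E.coker_of_conf hconf₂
  obtain ⟨t, ht, huniq⟩ := coker.2 (biprod.snd : A ⊞ B ⟶ B) (by simp)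
  have hzero : biprod.inl ≫ d₂ = 0 := coker.1
  set s : B ⟶ C := biprod.inr ≫ d₂ with hs
  have hsnd : biprod.snd ≫ s = d₂ := by
    apply biprod.hom_ext'
    · rw [← Category.assoc]; simp [hs, hzero]
    · rw [← Category.assoc]; simp [hs]
  have hts : t ≫ s = 𝟙 C := by
    obtain ⟨u, hu, huu⟩ := coker.2 d₂ hzero
    have e1 : t ≫ s = u := huu _ (by show d₂ ≫ (t ≫ s) = d₂; rw [← Category.assoc, ht, hsnd])
    have e2 : 𝟙 C = u := huu _ (by show d₂ ≫ 𝟙 C = d₂; simp)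
    rw [e1, ← e2]
  have hst : s ≫ t = 𝟙 B := by
    rw [hs, Category.assoc, ht]; simp
  refine E.isoClosed (Iso.refl A) (Iso.refl (A ⊞ B)) ⟨t, s, hts, hst⟩ (by simp) ?_ hconf₂
  show d₂ ≫ t = 𝟙 (A ⊞ B) ≫ biprod.snd
  rw [ht]; simp

/-- `biprod.desc g (𝟙 Z)` is a deflation. -/
lemma isDeflation_desc_id (E : ExactStructure M) {Y Z : M} (g : Y ⟶ Z) :
    IsDeflation E.conf (biprod.desc g (𝟙 Z)) := by
  set τ : Y ⊞ Z ⟶ Y ⊞ Z := biprod.lift biprod.fst (biprod.desc (-g) (𝟙 Z)) with hτ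
  set σ : Y ⊞ Z ⟶ Y ⊞ Z := biprod.lift biprod.fst (biprod.desc g (𝟙 Z)) with hσ
  have hτσ : τ ≫ σ = 𝟙 (Y ⊞ Z) := by
    apply biprod.hom_ext' <;> apply biprod.hom_ext <;> simp [hτ, hσ]
  have hστ : σ ≫ τ = 𝟙 (Y ⊞ Z) := by
    apply biprod.hom_ext' <;> apply biprod.hom_ext <;> simp [hτ, hσ]
  have hbase := conf_inl_snd E Y Z
  have hcomm : biprod.snd ≫ 𝟙 Z = τ ≫ biprod.desc g (𝟙 Z) := by
    apply biprod.hom_ext' <;> simp [hτ]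
  refine ⟨Y, biprod.inl ≫ τ,
    E.isoClosed (Iso.refl Y) ⟨τ, σ, hτσ, hστ⟩ (Iso.refl Z) (by simp) hcomm hbase⟩

/-- `biprod.map (𝟙 Y) β` is a deflation whenever `β` is. -/
lemma isDeflation_map_id (E : ExactStructure M) {P₀ Z : M} (β : P₀ ⟶ Z)
    (hβ : IsDeflation E.conf β) (Y : M) :
    IsDeflation E.conf (biprod.map (𝟙 Y) β) := by
  obtain ⟨A, p', g', ⟨X₀, i₀, hconf₀⟩, hpb⟩ :=
    E.defl_pullback β hβ (biprod.snd : Y ⊞ Z ⟶ Z)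
  have hw : g' ≫ β = p' ≫ biprod.snd := hpb.w
  set φ : Y ⊞ P₀ ⟶ A := hpb.lift biprod.snd (biprod.map (𝟙 Y) β) (by simp) with hφ
  have hφg : φ ≫ g' = biprod.snd := hpb.lift_fst _ _ _
  have hφp : φ ≫ p' = biprod.map (𝟙 Y) β := hpb.lift_snd _ _ _
  set ψ : A ⟶ Y ⊞ P₀ := biprod.lift (p' ≫ biprod.fst) g' with hψdef
  have hψ : ψ ≫ biprod.map (𝟙 Y) β = p' := by
    apply biprod.hom_ext
    · simp [hψdef]
    · simp [hψdef, hw]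
  have hφψ : φ ≫ ψ = 𝟙 (Y ⊞ P₀) := by
    apply biprod.hom_ext
    · rw [Category.assoc, hψdef, biprod.lift_fst, ← Category.assoc, hφp, biprod.map_fst]
      simp
    · simp [hψdef, hφg]
  have hψφ : ψ ≫ φ = 𝟙 A := by
    apply hpb.hom_ext
    · rw [Category.assoc, hφg]; simp [hψdef]
    · rw [Category.assoc, hφp]; simp [hψ]
  refine ⟨X₀, i₀ ≫ ψ,
    E.isoClosed (Iso.refl X₀) ⟨ψ, φ, hψφ, hφψ⟩ (Iso.refl (Y ⊞ Z)) (by simp) ?_ hconf₀⟩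
  show p' ≫ 𝟙 (Y ⊞ Z) = ψ ≫ biprod.map (𝟙 Y) β
  rw [hψ]; simp

end AuxStatement2

/-- if `𝒫` is strongly contravariantly finite, every morphism `g : Y ⟶ Z`
fits into a conflation `0 → X → Y ⊕ P → Z → 0` (with deflation of components `g` and a
`𝒫`-precover `β`) which is `Hom(𝒫,-)`-exact. -/
theorem exists_homCovExact_conflation {M : Type u} [Category.{v} M] [Preadditive M]
    [HasBinaryBiproducts M] (E : ExactStructure M) (P : Set M) (hP : IsAddSubcat P)
    (hcontra : StronglyContraFinite E.conf P) {Y Z : M} (g : Y ⟶ Z) :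
    ∃ (Pₒ X : M), Pₒ ∈ P ∧ ∃ (β : Pₒ ⟶ Z), IsPrecover P β ∧
      ∃ (i : X ⟶ Y ⊞ Pₒ), E.conf i (biprod.desc g β) ∧
        HomCovExact P i (biprod.desc g β) := by
  obtain ⟨P₀, β, hpre, hdefβ⟩ := hcontra Z
  have d1 := isDeflation_map_id E β hdefβ Y
  have d2 := isDeflation_desc_id E g
  obtain ⟨X, i, hconf⟩ := E.defl_comp (biprod.map (𝟙 Y) β) (biprod.desc g (𝟙 Z)) d1 d2
  have hcomp : biprod.map (𝟙 Y) β ≫ biprod.desc g (𝟙 Z) = biprod.desc g β := by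
    apply biprod.hom_ext' <;> simp
  rw [hcomp] at hconf
  refine ⟨P₀, X, hpre.1, β, hpre, i, hconf, ?_⟩
  intro Q hQ
  have ker := E.ker_of_conf hconf
  refine ⟨?_, ?_, ?_⟩
  · intro g' hg'
    obtain ⟨t, ht, huniq⟩ := ker.2 (0 : Q ⟶ Y ⊞ P₀) (by simp)
    have e1 : g' = t := huniq _ (by show g' ≫ i = 0; exact hg')
    have e2 : (0 : Q ⟶ X) = t := huniq _ (by show (0 : Q ⟶ X) ≫ i = 0; simp)
    rw [e1, ← e2]
  · intro u hu
    obtain ⟨t, ht, _⟩ := ker.2 u hu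
    exact ⟨t, ht⟩
  · intro h
    obtain ⟨q, hq⟩ := hpre.2 Q hQ h
    exact ⟨q ≫ biprod.inr, by rw [Category.assoc, biprod.inr_desc, hq]⟩

end PaperQEC
end

section
/- Let (M, E) be an exact category and 𝒫 a full additive subcategory of M satisfying condition (▼). Then the quotient category M/𝒫 has kernels: every morphism of M/𝒫 admits a kernel. More precisely, if f : X → Y is a morphism of M, 0 → P1 → P0 →β Y → 0 is a conflation with P0, P1 ∈ 𝒫 and β a 𝒫-precover, and k : K → X is obtained by forming the pullback of f along β, then k̄ : K → X is the kernel of f̄ in M/𝒫. -/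
open CategoryTheory CategoryTheory.Limits

universe v u

namespace PaperQEC

section Aux

variable {C : Type u} [Category.{v} C] [Preadditive C]

/-- When `P` is an additive subcategory, morphisms factoring through an object of `P`
already form a subgroup. -/
def factorSub [HasBinaryBiproducts C] (P : Set C) (hP : IsAddSubcat P) (X Y : C) :
    AddSubgroup (X ⟶ Y) where
  carrier := {f | FactorsThru P f}
  zero_mem' := by
    obtain ⟨Q, hQ⟩ := hP.nonempty
    exact ⟨Q, hQ, 0, 0, by simp⟩
  add_mem' := by
    rintro a b ⟨Z, hZ, g, h', rfl⟩ ⟨Z', hZ', g', h'', rfl⟩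
    exact ⟨Z ⊞ Z', hP.sumClosed hZ hZ', biprod.lift g g', biprod.desc h' h'', by simp⟩
  neg_mem' := by
    rintro a ⟨Z, hZ, g, h', rfl⟩
    exact ⟨Z, hZ, -g, h', by simp⟩

lemma mem_factorIdeal_iff [HasBinaryBiproducts C] {P : Set C} (hP : IsAddSubcat P)
    {X Y : C} {f : X ⟶ Y} : f ∈ factorIdeal P X Y ↔ FactorsThru P f := by
  constructor
  · intro hf
    exact (AddSubgroup.closure_le (factorSub P hP X Y)).mpr (fun g hg => hg) hf
  · intro hf
    exact AddSubgroup.subset_closure hf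

lemma qmap_comp (P : Set C) {X Y Z : C} (f : X ⟶ Y) (g : Y ⟶ Z) :
    qmap P (f ≫ g) = qmap P f ≫ qmap P g := rfl

lemma qmap_eq_zero_iff (P : Set C) {X Y : C} (f : X ⟶ Y) :
    qmap P f = 0 ↔ f ∈ factorIdeal P X Y :=
  QuotientAddGroup.eq_zero_iff f

lemma qmap_eq_iff (P : Set C) {X Y : C} (f g : X ⟶ Y) :
    qmap P f = qmap P g ↔ f - g ∈ factorIdeal P X Y := by
  rw [← sub_eq_zero]
  exact QuotientAddGroup.eq_zero_iff (f - g)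

lemma hasKernel_of_isKernelOf {D : Type*} [Category D] [Preadditive D] {K X Y : D}
    {k : K ⟶ X} {f : X ⟶ Y} (h : IsKernelOf k f) : HasKernel f :=
  HasLimit.mk ⟨KernelFork.ofι k h.1,
    KernelFork.IsLimit.ofι k h.1
      (fun g hg => (h.2 g hg).exists.choose)
      (fun g hg => (h.2 g hg).exists.choose_spec)
      (fun g hg m hm => (h.2 g hg).unique hm (h.2 g hg).exists.choose_spec)⟩

/-- The key computation: the pullback of a conflation whose deflation is a `P`-precover
gives a kernel in the quotient category. -/
lemma kernel_of_pullback [HasBinaryBiproducts C] (E : ExactStructure C) (P : Set C)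
    (hP : IsAddSubcat P) {X Y P₀ P₁ K : C} (f : X ⟶ Y) (j : P₁ ⟶ P₀) (β : P₀ ⟶ Y)
    (k : K ⟶ X) (l : K ⟶ P₀) (hconf : E.conf j β) (hP₀ : P₀ ∈ P) (hP₁ : P₁ ∈ P)
    (hpre : IsPrecover P β) (hpb : IsPullback k l f β) :
    IsKernelOf (qmap P k) (qmap P f) := by
  have hker := E.ker_of_conf hconf
  have hjβ : j ≫ β = 0 := hker.1
  have hsq : k ≫ f = l ≫ β := hpb.w
  have hj'w : (0 : P₁ ⟶ X) ≫ f = j ≫ β := by simp [hjβ]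
  set j' : P₁ ⟶ K := hpb.lift 0 j hj'w with hj'def
  have hj'k : j' ≫ k = 0 := hpb.lift_fst _ _ _
  have hj'l : j' ≫ l = j := hpb.lift_snd _ _ _
  constructor
  · show qmap P k ≫ qmap P f = 0
    rw [← qmap_comp, qmap_eq_zero_iff]
    exact (mem_factorIdeal_iff hP).mpr ⟨P₀, hP₀, l, β, hsq.symm⟩
  · intro T' g' hg'
    obtain ⟨g, rfl⟩ := Quotient.exists_rep g'
    have hg0 : g ≫ f ∈ factorIdeal P T'.obj Y := by
      rw [← qmap_eq_zero_iff, qmap_comp]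
      exact hg'
    obtain ⟨Q, hQ, a, b, hab⟩ := (mem_factorIdeal_iff hP).mp hg0
    obtain ⟨c, hc⟩ := hpre.2 Q hQ b
    have htw : g ≫ f = (a ≫ c) ≫ β := by
      rw [Category.assoc, hc, hab]
    set t : T'.obj ⟶ K := hpb.lift g (a ≫ c) htw with htdef
    have htk : t ≫ k = g := hpb.lift_fst _ _ _
    refine ⟨qmap P t, ?_, ?_⟩
    · show qmap P t ≫ qmap P k = qmap P g
      rw [← qmap_comp, htk]
    · intro u hu
      obtain ⟨s, rfl⟩ := Quotient.exists_rep u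
      have hsk : qmap P (s ≫ k) = qmap P (t ≫ k) := by
        rw [htk]
        exact hu
      have hmem : (s - t) ≫ k ∈ factorIdeal P T'.obj X := by
        have := (qmap_eq_iff P (s ≫ k) (t ≫ k)).mp hsk
        simpa [Preadditive.sub_comp] using this
      obtain ⟨Q', hQ', a', b', hab'⟩ := (mem_factorIdeal_iff hP).mp hmem
      obtain ⟨c', hc'⟩ := hpre.2 Q' hQ' (b' ≫ f)
      set d : Q' ⟶ K := hpb.lift b' c' hc'.symm with hddef
      have hdk : d ≫ k = b' := hpb.lift_fst _ _ _
      set u₀ : T'.obj ⟶ K := s - t - a' ≫ d with hu₀def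
      have hu₀k : u₀ ≫ k = 0 := by
        rw [hu₀def, Preadditive.sub_comp, Category.assoc, hdk, hab', sub_self]
      have hu₀lβ : (u₀ ≫ l) ≫ β = 0 := by
        rw [Category.assoc, ← hsq, ← Category.assoc, hu₀k, Limits.zero_comp]
      obtain ⟨w, hw, -⟩ := hker.2 (u₀ ≫ l) hu₀lβ
      have hwu : w ≫ j' = u₀ := by
        apply hpb.hom_ext
        · rw [Category.assoc, hj'k, hu₀k, Limits.comp_zero]
        · rw [Category.assoc, hj'l, hw]
      have hst : s - t = a' ≫ d + w ≫ j' := by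
        rw [hwu, hu₀def]
        abel
      have : s - t ∈ factorIdeal P T'.obj K := by
        rw [hst]
        exact AddSubgroup.add_mem _
          ((mem_factorIdeal_iff hP).mpr ⟨Q', hQ', a', d, rfl⟩)
          ((mem_factorIdeal_iff hP).mpr ⟨P₁, hP₁, w, j', rfl⟩)
      exact (qmap_eq_iff P s t).mpr this

end Aux

/-- if `𝒫` satisfies condition (▼), the quotient category `M/𝒫` has
kernels; more precisely, pulling back a conflation `0 → P₁ → P₀ → Y → 0` (with `β` a
`𝒫`-precover) along `f : X ⟶ Y` yields a morphism `k : K ⟶ X` with `k̄` the kernel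
of `f̄`. -/
theorem quotient_hasKernels {M : Type u} [Category.{v} M] [Preadditive M]
    [HasBinaryBiproducts M] (E : ExactStructure M) (P : Set M) (hP : IsAddSubcat P)
    (h : CondCov E.conf P) :
    HasKernels (QuotObj P) ∧
    ∀ {X Y P₀ P₁ K : M} (f : X ⟶ Y) (j : P₁ ⟶ P₀) (β : P₀ ⟶ Y) (k : K ⟶ X) (l : K ⟶ P₀),
      E.conf j β → P₀ ∈ P → P₁ ∈ P → IsPrecover P β → IsPullback k l f β →
      IsKernelOf (qmap P k) (qmap P f) := by
  constructor
  · refine ⟨@fun A B φ => ?_⟩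
    obtain ⟨f, rfl⟩ := Quotient.exists_rep φ
    obtain ⟨P₀, P₁, j, β, hconf, hP₀, hP₁, hpre⟩ := h.2 B.obj
    obtain ⟨K, k, l, -, hpb⟩ := E.defl_pullback β ⟨P₁, j, hconf⟩ f
    exact hasKernel_of_isKernelOf
      (kernel_of_pullback E P hP f j β k l hconf hP₀ hP₁ hpre hpb.flip)
  · intro X Y P₀ P₁ K f j β k l hconf hP₀ hP₁ hpre hpb
    exact kernel_of_pullback E P hP f j β k l hconf hP₀ hP₁ hpre hpb

end PaperQEC
end

section
/- Let (M, E) be an exact category and 𝒫 a pseudo-cluster tilting subcategory of M. Then every conflation of M which is either Hom(𝒫,−)-exact or Hom(−,𝒫)-exact belongs to the class 𝒮. -/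
open CategoryTheory CategoryTheory.Limits

universe v u

namespace PaperQEC

section Helpers

variable {M : Type u} [Category.{v} M] [Preadditive M]

/-- The source of the kernel of an identity map is a "zero-like" object. -/
lemma idZero_of_conf_id_right {E : ExactStructure M} {W X : M} {z : W ⟶ X}
    (h : E.conf z (𝟙 X)) : 𝟙 W = 0 := by
  obtain ⟨hz0, huniv⟩ := E.ker_of_conf h
  have hz : z = 0 := by simpa using hz0
  obtain ⟨t, _, huniq⟩ := huniv (0 : W ⟶ X) (by simp)
  have h1 : 𝟙 W = t := huniq _ (by simp [hz])
  have h2 : (0 : W ⟶ W) = t := huniq _ (by simp)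
  rw [h1, ← h2]

/-- The target of the cokernel of an identity map is a "zero-like" object. -/
lemma idZero_of_conf_id_left {E : ExactStructure M} {X Q : M} {p : X ⟶ Q}
    (h : E.conf (𝟙 X) p) : 𝟙 Q = 0 := by
  obtain ⟨hp0, huniv⟩ := E.coker_of_conf h
  have hp : p = 0 := by simpa using hp0
  obtain ⟨t, _, huniq⟩ := huniv (0 : X ⟶ Q) (by simp)
  have h1 : 𝟙 Q = t := huniq _ (by simp [hp])
  have h2 : (0 : Q ⟶ Q) = t := huniq _ (by simp)
  rw [h1, ← h2]

lemma hom_from_zeroish {W X : M} (hW : 𝟙 W = 0) (f : W ⟶ X) : f = 0 := by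
  rw [← Category.id_comp f, hW, Limits.zero_comp]

lemma hom_to_zeroish {W X : M} (hW : 𝟙 W = 0) (f : X ⟶ W) : f = 0 := by
  rw [← Category.comp_id f, hW, Limits.comp_zero]

/-- Transfer a conflation `W ↪ X ↠ X` (with `W` zero-like) to any other
zero-like object `O`. -/
lemma conf_zero_id {E : ExactStructure M} {W X O : M} {z : W ⟶ X}
    (h : E.conf z (𝟙 X)) (hO : 𝟙 O = 0) : E.conf (0 : O ⟶ X) (𝟙 X) := by
  have hW : 𝟙 W = 0 := idZero_of_conf_id_right h
  have eX : W ≅ O :=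
    { hom := 0, inv := 0,
      hom_inv_id := by rw [Limits.zero_comp, hW],
      inv_hom_id := by rw [Limits.zero_comp, hO] }
  exact E.isoClosed eX (Iso.refl X) (Iso.refl X)
    (by simp [hom_from_zeroish hW z]) (by simp) h

end Helpers

/-- every conflation which is `Hom(𝒫,-)`-exact or `Hom(-,𝒫)`-exact
belongs to the class `𝒮`. -/
theorem homExact_mem_S {M : Type u} [Category.{v} M] [Preadditive M]
    [HasBinaryBiproducts M] (E : ExactStructure M) (P : Set M) (hP : IsAddSubcat P)
    (h : PseudoClusterTilting E.conf P) {X Y Z : M} (i : X ⟶ Y) (d : Y ⟶ Z)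
    (hconf : E.conf i d) (hexact : HomCovExact P i d ∨ HomContraExact P i d) :
    memS E.conf P i d := by
  refine ⟨hconf, ?_⟩
  rcases hexact with hcov | hcontra
  · -- Hom(P,-)-exact case: take U = X, M₁ a zero-like object, M₂ = Z.
    obtain ⟨M₁, p₁, hp₁⟩ := E.id_isInflation X
    have hM₁ : 𝟙 M₁ = 0 := idZero_of_conf_id_left hp₁
    obtain ⟨W, z, hz⟩ := E.id_isDeflation Z
    have hm : E.conf (0 : M₁ ⟶ Z) (𝟙 Z) := conf_zero_id hz hM₁
    refine ⟨X, M₁, Z, 𝟙 X, p₁, i, d, 0, 𝟙 Z, hp₁, hconf, hm, hcov, ?_, by simp, ?_, by simp⟩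
    · intro Q hQ
      refine ⟨fun g hg => by simpa using hg, fun u _ => ⟨u, by simp⟩, fun hmap => ?_⟩
      exact ⟨0, by rw [hom_from_zeroish hM₁ hmap, Limits.zero_comp]⟩
    · rw [Limits.comp_zero, (E.ker_of_conf hconf).1]
  · -- Hom(-,P)-exact case: take U a zero-like object, M₁ = X, M₂ = Y.
    obtain ⟨U, z, hz⟩ := E.id_isDeflation Y
    have hU : 𝟙 U = 0 := idZero_of_conf_id_right hz
    obtain ⟨W, z', hz'⟩ := E.id_isDeflation X
    have hW : 𝟙 W = 0 := idZero_of_conf_id_right hz'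
    have hu₁ : E.conf (0 : U ⟶ X) (𝟙 X) := conf_zero_id hz' hU
    have hu₂ : E.conf (0 : U ⟶ Y) (𝟙 Y) := conf_zero_id hz hU
    refine ⟨U, X, Y, 0, 𝟙 X, 0, 𝟙 Y, i, d, hu₁, hu₂, hconf, ?_, hcontra,
      by simp, by simp, by simp⟩
    intro Q hQ
    refine ⟨fun g hg => hom_to_zeroish hU g, fun u hu => ⟨0, ?_⟩,
      fun hmap => ⟨hmap, by simp⟩⟩
    have : u = 0 := by simpa using hu
    simp [this]

end PaperQEC
end
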